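/- Let m ≥ 1, δ ∈ (0,1], and consider m i.i.d. Bernoulli(δ) indicators I_1,…,I_m with S = Σ_j I_j. Then Σ_{j=1}^m E[I_j / S^v] = E[1_{S>0}/S^{v-1}] ≤ v!·m!/((m+v-1)!·δ^{v-1}), where I_j/S^v := 0 when S = 0. -/

import Mathlib

open MeasureTheory ProbabilityTheory

section Aux

lemma binom_law_aux {Ω : Type*} [MeasurableSpace Ω] (P : Measure Ω) [IsProbabilityMeasure P]
    (m : ℕ) (δ : ℝ) (hδ0 : 0 ≤ δ) (hδ1 : δ ≤ 1)
    (I : Fin m → Ω → ℕ) (hImeas : ∀ j, Measurable (I j)) (hIbdd : ∀ j ω, I j ω ≤ 1)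
    (hIiid : iIndepFun I P)
    (hIlaw : ∀ j, P {ω | I j ω = 1} = ENNReal.ofReal δ) (s : ℕ) :
    P {ω | (∑ j, I j ω) = s} =
      ENNReal.ofReal ((m.choose s : ℝ) * (δ ^ s * (1 - δ) ^ (m - s))) := by
  classical
  set A : Finset (Fin m) → Set Ω :=
    fun T => ⋂ j, I j ⁻¹' {if j ∈ T then 1 else 0} with hA
  have h0 : ∀ j, P (I j ⁻¹' {0}) = ENNReal.ofReal (1 - δ) := by
    intro j
    have hc : I j ⁻¹' {0} = (I j ⁻¹' {1})ᶜ := by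
      ext ω
      have := hIbdd j ω
      simp only [Set.mem_preimage, Set.mem_singleton_iff, Set.mem_compl_iff]
      omega
    have h1 : P (I j ⁻¹' {1}) = ENNReal.ofReal δ := hIlaw j
    rw [hc, measure_compl ((hImeas j) (measurableSet_singleton 1)) (measure_ne_top _ _), h1,
      measure_univ, ENNReal.ofReal_sub 1 hδ0, ENNReal.ofReal_one]
  have hmeasA : ∀ T, MeasurableSet (A T) := by
    intro T
    exact MeasurableSet.iInter fun j => (hImeas j) (measurableSet_singleton _)
  have hPA : ∀ T : Finset (Fin m), P (A T) =
      ENNReal.ofReal δ ^ T.card * ENNReal.ofReal (1 - δ) ^ (m - T.card) := by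
    intro T
    have := (iIndepFun_iff_measure_inter_preimage_eq_mul.mp hIiid) Finset.univ
      (sets := fun j => {if j ∈ T then (1:ℕ) else 0})
      (fun j _ => measurableSet_singleton _)
    have hAeq : A T = ⋂ j ∈ Finset.univ, I j ⁻¹' {if j ∈ T then (1:ℕ) else 0} := by
      simp [hA]
    rw [hAeq, this]
    rw [← Finset.prod_filter_mul_prod_filter_not Finset.univ (fun j => j ∈ T)]
    have e1 : ∀ j ∈ Finset.univ.filter (fun j => j ∈ T),
        P (I j ⁻¹' {if j ∈ T then (1:ℕ) else 0}) = ENNReal.ofReal δ := by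
      intro j hj
      simp only [Finset.mem_filter] at hj
      rw [if_pos hj.2]
      exact hIlaw j
    have e2 : ∀ j ∈ Finset.univ.filter (fun j => ¬ j ∈ T),
        P (I j ⁻¹' {if j ∈ T then (1:ℕ) else 0}) = ENNReal.ofReal (1 - δ) := by
      intro j hj
      simp only [Finset.mem_filter] at hj
      rw [if_neg hj.2]
      exact h0 j
    rw [Finset.prod_congr rfl e1, Finset.prod_congr rfl e2,
      Finset.prod_const, Finset.prod_const]
    congr 2
    · simp [Finset.filter_mem_eq_inter]
    · rw [Finset.filter_not]
      rw [Finset.card_sdiff_of_subset (by simp [Finset.filter_mem_eq_inter])]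
      congr 1
      · simp
      · simp [Finset.filter_mem_eq_inter]
  have hunion : {ω | (∑ j, I j ω) = s} = ⋃ T ∈ Finset.univ.powersetCard s, A T := by
    ext ω
    simp only [Set.mem_setOf_eq, Set.mem_iUnion, Finset.mem_powersetCard]
    constructor
    · intro hsum
      refine ⟨Finset.univ.filter (fun j => I j ω = 1), ⟨⟨Finset.subset_univ _, ?_⟩, ?_⟩⟩
      · rw [← hsum]
        rw [Finset.card_filter]
        apply Finset.sum_congr rfl
        intro j _
        have := hIbdd j ω
        by_cases h : I j ω = 1 <;> simp [h] <;> omega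
      · simp only [hA, Set.mem_iInter, Set.mem_preimage, Set.mem_singleton_iff,
          Finset.mem_filter, Finset.mem_univ, true_and]
        intro j
        have := hIbdd j ω
        by_cases h : I j ω = 1 <;> simp [h] <;> omega
    · rintro ⟨T, ⟨⟨-, hcard⟩, hmem⟩⟩
      simp only [hA, Set.mem_iInter, Set.mem_preimage, Set.mem_singleton_iff] at hmem
      calc ∑ j, I j ω = ∑ j, (if j ∈ T then 1 else 0) := Finset.sum_congr rfl (fun j _ => hmem j)
        _ = T.card := by simp
        _ = s := hcard
  have hdisj : ((Finset.univ.powersetCard s : Finset (Finset (Fin m))) :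
      Set (Finset (Fin m))).PairwiseDisjoint A := by
    intro T hT T' hT' hne
    apply Set.disjoint_left.mpr
    intro ω hω hω'
    simp only [hA, Set.mem_iInter, Set.mem_preimage, Set.mem_singleton_iff] at hω hω'
    apply hne
    ext j
    have h1 := hω j
    have h2 := hω' j
    by_cases hj : j ∈ T <;> by_cases hj' : j ∈ T' <;> simp_all
  rw [hunion, measure_biUnion_finset hdisj (fun T _ => hmeasA T)]
  rw [Finset.sum_congr rfl (fun T hT => by
    rw [hPA T, (Finset.mem_powersetCard.mp hT).2])]
  rw [Finset.sum_const, Finset.card_powersetCard, Finset.card_univ, Fintype.card_fin]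
  rw [ENNReal.ofReal_mul (by positivity), ENNReal.ofReal_mul (by positivity),
    ENNReal.ofReal_pow hδ0, ENNReal.ofReal_pow (by linarith), ENNReal.ofReal_natCast]
  rw [nsmul_eq_mul]

lemma integral_comp_nat_fin {Ω : Type*} [MeasurableSpace Ω] (P : Measure Ω)
    [IsProbabilityMeasure P] (S : Ω → ℕ) (hSm : Measurable S)
    (m : ℕ) (hbd : ∀ ω, S ω ≤ m) (f : ℕ → ℝ) :
    ∫ ω, f (S ω) ∂P = ∑ s ∈ Finset.range (m+1), f s * (P {ω | S ω = s}).toReal := by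
  have hpt : ∀ ω, f (S ω) =
      ∑ s ∈ Finset.range (m+1), Set.indicator (S ⁻¹' {s}) (fun _ => f s) ω := by
    intro ω
    rw [Finset.sum_eq_single (S ω)]
    · simp [Set.indicator_of_mem, Set.mem_preimage]
    · intro b _ hb
      apply Set.indicator_of_notMem
      simp [Set.mem_preimage]
      omega
    · intro h
      exact absurd (Finset.mem_range.mpr (Nat.lt_succ_of_le (hbd ω))) h
  rw [integral_congr_ae (Filter.Eventually.of_forall hpt)]
  rw [integral_finset_sum _ (fun s _ =>
    (integrable_const (f s)).indicator (hSm (measurableSet_singleton s)))]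
  apply Finset.sum_congr rfl
  intro s _
  rw [integral_indicator_const (f s) (hSm (measurableSet_singleton s))]
  rw [smul_eq_mul, mul_comm]
  congr 1

lemma fact_bound_aux (w : ℕ) : ∀ s : ℕ, 1 ≤ s →
    (s + w).factorial ≤ (w + 1).factorial * s ^ w * s.factorial := by
  induction w with
  | zero => intro s hs; simp [Nat.factorial]
  | succ w ih =>
    intro s hs
    have h1 : (s + (w+1)).factorial = (s + w + 1) * (s + w).factorial := by
      rw [show s + (w+1) = (s + w) + 1 by ring, Nat.factorial_succ]
    rw [h1]
    calc (s + w + 1) * (s + w).factorial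
        ≤ (s + w + 1) * ((w + 1).factorial * s ^ w * s.factorial) :=
          Nat.mul_le_mul_left _ (ih s hs)
      _ ≤ ((w + 2) * s) * ((w + 1).factorial * s ^ w * s.factorial) := by
          apply Nat.mul_le_mul_right
          calc s + w + 1 ≤ s + (w+1) * s := by
                have : w + 1 ≤ (w + 1) * s := Nat.le_mul_of_pos_right _ hs
                omega
            _ = (w + 2) * s := by ring
      _ = ((w + 2) * (w + 1).factorial) * s ^ (w + 1) * s.factorial := by ring
      _ = (w + 1 + 1).factorial * s ^ (w + 1) * s.factorial := by
          have hfs : (w + 1 + 1).factorial = (w + 2) * (w + 1).factorial :=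
            Nat.factorial_succ (w+1)
          rw [hfs]

lemma choose_bound_aux (m v s : ℕ) (hv : 1 ≤ v) (hs1 : 1 ≤ s) (hsm : s ≤ m) :
    m.choose s * (m + v - 1).factorial ≤
      v.factorial * m.factorial * ((m + v - 1).choose (s + v - 1) * s ^ (v - 1)) := by
  obtain ⟨w, rfl⟩ : ∃ w, v = w + 1 := ⟨v - 1, by omega⟩
  have hmv : m + (w + 1) - 1 = m + w := by omega
  have hsv : s + (w + 1) - 1 = s + w := by omega
  rw [hmv, hsv]
  simp only [Nat.add_sub_cancel]
  have key := Nat.choose_mul_factorial_mul_factorial (show s + w ≤ m + w by omega)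
  rw [show m + w - (s + w) = m - s from by omega] at key
  replace key : (m + w).factorial
      = (m+w).choose (s+w) * (s+w).factorial * (m - s).factorial := key.symm
  have keym : m.factorial = m.choose s * s.factorial * (m - s).factorial := by
    rw [Nat.choose_mul_factorial_mul_factorial hsm]
  rw [key, keym]
  have hf := fact_bound_aux w s hs1
  calc m.choose s * ((m+w).choose (s+w) * (s+w).factorial * (m - s).factorial)
      ≤ m.choose s * ((m+w).choose (s+w) * ((w + 1).factorial * s ^ w * s.factorial)
          * (m - s).factorial) := by
        apply Nat.mul_le_mul_left
        apply Nat.mul_le_mul_right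
        exact Nat.mul_le_mul_left _ hf
    _ = (w+1).factorial * (m.choose s * s.factorial * (m - s).factorial)
          * ((m+w).choose (s+w) * s ^ w) := by ring

lemma real_sum_bound_aux (m v : ℕ) (hm : 1 ≤ m) (hv : 1 ≤ v) (δ : ℝ)
    (hδ0 : 0 < δ) (hδ1 : δ ≤ 1) :
    ∑ s ∈ Finset.range (m+1), (if s ≠ 0 then (1:ℝ)/(s:ℝ)^(v-1) else 0) *
        ((m.choose s : ℝ) * (δ^s * (1-δ)^(m-s)))
      ≤ (v.factorial * m.factorial : ℝ) / ((m + v - 1).factorial * δ ^ (v-1)) := by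
  have h1δ : (0:ℝ) ≤ 1 - δ := by linarith
  set K : ℝ := (v.factorial * m.factorial : ℝ) / ((m + v - 1).factorial) with hK
  have hKpos : 0 ≤ K := by positivity
  have hterm : ∀ s ∈ Finset.range (m+1),
      (if s ≠ 0 then (1:ℝ)/(s:ℝ)^(v-1) else 0) * ((m.choose s : ℝ) * (δ^s * (1-δ)^(m-s)))
        ≤ K * (((m+v-1).choose (s+v-1) : ℝ) * (δ^s * (1-δ)^(m-s))) := by
    intro s hs
    by_cases h0 : s = 0
    · subst h0
      simp only [ne_eq, not_true_eq_false, if_false, zero_mul]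
      positivity
    · rw [if_pos h0]
      have hs1 : 1 ≤ s := Nat.one_le_iff_ne_zero.mpr h0
      have hsm : s ≤ m := Nat.lt_succ_iff.mp (Finset.mem_range.mp hs)
      have hnat := choose_bound_aux m v s hv hs1 hsm
      have hreal : (m.choose s : ℝ) * ((m+v-1).factorial : ℝ) ≤
          (v.factorial : ℝ) * (m.factorial : ℝ) *
            (((m+v-1).choose (s+v-1) : ℝ) * (s:ℝ)^(v-1)) := by
        exact_mod_cast hnat
      have hp : (0:ℝ) < (s:ℝ)^(v-1) := by positivity
      have hf : (0:ℝ) < (((m+v-1).factorial : ℕ) : ℝ) := by positivity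
      have h1 : (m.choose s : ℝ) / (s:ℝ)^(v-1) ≤ K * ((m+v-1).choose (s+v-1) : ℝ) := by
        rw [div_le_iff₀ hp, hK, div_mul_eq_mul_div, div_mul_eq_mul_div, le_div_iff₀ hf]
        calc (m.choose s : ℝ) * ((m+v-1).factorial : ℝ)
            ≤ (v.factorial : ℝ) * (m.factorial : ℝ) *
              (((m+v-1).choose (s+v-1) : ℝ) * (s:ℝ)^(v-1)) := hreal
          _ = (v.factorial : ℝ) * (m.factorial : ℝ) *
              ((m+v-1).choose (s+v-1) : ℝ) * (s:ℝ)^(v-1) := by ring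
      have hX : (0:ℝ) ≤ δ^s * (1-δ)^(m-s) := by positivity
      calc (1:ℝ)/(s:ℝ)^(v-1) * ((m.choose s : ℝ) * (δ^s * (1-δ)^(m-s)))
          = ((m.choose s : ℝ) / (s:ℝ)^(v-1)) * (δ^s * (1-δ)^(m-s)) := by ring
        _ ≤ (K * ((m+v-1).choose (s+v-1) : ℝ)) * (δ^s * (1-δ)^(m-s)) :=
            mul_le_mul_of_nonneg_right h1 hX
        _ = K * (((m+v-1).choose (s+v-1) : ℝ) * (δ^s * (1-δ)^(m-s))) := by ring
  refine le_trans (Finset.sum_le_sum hterm) ?_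
  rw [← Finset.mul_sum]
  set G : ℕ → ℝ := fun k => δ^k * (1-δ)^((m+v-1) - k) * ((m+v-1).choose k : ℝ) with hG
  have hshift : ∀ s ∈ Finset.range (m+1),
      ((m+v-1).choose (s+v-1) : ℝ) * (δ^s * (1-δ)^(m-s))
        = (1/δ^(v-1)) * G ((v-1) + s) := by
    intro s hs
    have hsm : s ≤ m := Nat.lt_succ_iff.mp (Finset.mem_range.mp hs)
    have e0 : s + v - 1 = s + (v-1) := by omega
    have e1 : (v-1) + s = s + (v-1) := by ring
    have e2 : (m+v-1) - (s+(v-1)) = m - s := by omega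
    have e3 : δ^(s+(v-1)) = δ^s * δ^(v-1) := pow_add δ s (v-1)
    rw [hG, e0]
    simp only [e1, e2, e3]
    have hδp : δ^(v-1) ≠ 0 := by positivity
    field_simp
  rw [Finset.sum_congr rfl hshift, ← Finset.mul_sum]
  have hsum1 : ∑ s ∈ Finset.range (m+1), G ((v-1) + s) ≤ 1 := by
    have e4 : ∑ s ∈ Finset.range (m+1), G ((v-1) + s)
        = ∑ k ∈ Finset.Ico (v-1) (m+v), G k := by
      rw [Finset.sum_Ico_eq_sum_range, show m + v - (v-1) = m + 1 from by omega]
    rw [e4]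
    have hsub : Finset.Ico (v-1) (m+v) ⊆ Finset.range (m+v) := by
      rw [Finset.range_eq_Ico]
      exact Finset.Ico_subset_Ico (Nat.zero_le _) le_rfl
    have hGnn : ∀ k ∈ Finset.range (m+v), k ∉ Finset.Ico (v-1) (m+v) → 0 ≤ G k := by
      intro k _ _
      rw [hG]
      positivity
    refine le_trans (Finset.sum_le_sum_of_subset_of_nonneg hsub hGnn) ?_
    have := add_pow δ (1-δ) (m+v-1)
    rw [show δ + (1-δ) = 1 by ring, one_pow] at this
    rw [show m+v = (m+v-1)+1 by omega]
    rw [← this]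
  calc K * ((1/δ^(v-1)) * ∑ s ∈ Finset.range (m+1), G ((v-1) + s))
      ≤ K * ((1/δ^(v-1)) * 1) := by
        apply mul_le_mul_of_nonneg_left _ hKpos
        apply mul_le_mul_of_nonneg_left hsum1 (by positivity)
    _ = (v.factorial * m.factorial : ℝ) / ((m + v - 1).factorial * δ ^ (v-1)) := by
        rw [hK]
        field_simp

end Aux

/-- For `m` i.i.d. Bernoulli(δ) indicators `I_1,…,I_m` with `S = Σ_j I_j` and `v ≥ 1`,
`Σ_{j=1}^m E[I_j/S^v] = E[1_{S>0}/S^{v-1}] ≤ v!·m!/((m+v-1)!·δ^{v-1})`,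
with the convention `I_j/S^v := 0` when `S = 0`. -/
theorem bernoulli_sum_inverse_moment {Ω : Type*} [MeasurableSpace Ω] (P : Measure Ω)
    [IsProbabilityMeasure P] (m v : ℕ) (hm : 1 ≤ m) (hv : 1 ≤ v) (δ : ℝ)
    (hδ0 : 0 < δ) (hδ1 : δ ≤ 1)
    (I : Fin m → Ω → ℕ) (hImeas : ∀ j, Measurable (I j)) (hIbdd : ∀ j ω, I j ω ≤ 1)
    (hIiid : iIndepFun I P)
    (hIlaw : ∀ j, P {ω | I j ω = 1} = ENNReal.ofReal δ)
    (S : Ω → ℕ) (hS : ∀ ω, S ω = ∑ j, I j ω) :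
    (∑ j, ∫ ω, (if S ω ≠ 0 then (I j ω : ℝ) / (S ω : ℝ) ^ v else 0) ∂P)
        = ∫ ω, (if S ω ≠ 0 then (1 : ℝ) / (S ω : ℝ) ^ (v - 1) else 0) ∂P ∧
      ∫ ω, (if S ω ≠ 0 then (1 : ℝ) / (S ω : ℝ) ^ (v - 1) else 0) ∂P
        ≤ (v.factorial * m.factorial : ℝ) / ((m + v - 1).factorial * δ ^ (v - 1)) := by
  have hSfun : S = fun ω => ∑ j, I j ω := funext hS
  have hSmeas : Measurable S := by
    rw [hSfun]
    exact Finset.measurable_sum Finset.univ (fun j _ => hImeas j)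
  have hSbd : ∀ ω, S ω ≤ m := by
    intro ω
    rw [hS ω]
    calc ∑ j, I j ω ≤ ∑ _j : Fin m, 1 := Finset.sum_le_sum (fun j _ => hIbdd j ω)
      _ = m := by simp
  have hSset : MeasurableSet {ω | S ω ≠ 0} :=
    (hSmeas (measurableSet_singleton 0)).compl
  -- Part 1: equality
  have hint : ∀ j : Fin m, Integrable
      (fun ω => if S ω ≠ 0 then (I j ω : ℝ) / (S ω : ℝ) ^ v else 0) P := by
    intro j
    have hmeas : Measurable (fun ω => if S ω ≠ 0 then (I j ω : ℝ) / (S ω : ℝ) ^ v else 0) := by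
      refine Measurable.ite hSset ?_ measurable_const
      exact ((measurable_from_top.comp (hImeas j)).div
        ((measurable_from_top.comp hSmeas).pow_const v))
    refine (integrable_const (1:ℝ)).mono' hmeas.aestronglyMeasurable ?_
    refine Filter.Eventually.of_forall fun ω => ?_
    by_cases h : S ω ≠ 0
    · rw [if_pos h]
      have hS1 : (1:ℝ) ≤ (S ω : ℝ) := by exact_mod_cast Nat.one_le_iff_ne_zero.mpr h
      have hpow : (1:ℝ) ≤ (S ω : ℝ) ^ v := by
        calc (1:ℝ) = 1 ^ v := (one_pow v).symm
          _ ≤ (S ω : ℝ) ^ v := pow_le_pow_left₀ zero_le_one hS1 v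
      have hI1 : (I j ω : ℝ) ≤ 1 := by exact_mod_cast hIbdd j ω
      rw [Real.norm_eq_abs, abs_of_nonneg (by positivity), div_le_one (by positivity)]
      linarith
    · rw [if_neg h]; simp
  have heq : (∑ j, ∫ ω, (if S ω ≠ 0 then (I j ω : ℝ) / (S ω : ℝ) ^ v else 0) ∂P)
      = ∫ ω, (if S ω ≠ 0 then (1 : ℝ) / (S ω : ℝ) ^ (v - 1) else 0) ∂P := by
    rw [← integral_finset_sum Finset.univ (fun j _ => hint j)]
    apply integral_congr_ae
    refine Filter.Eventually.of_forall fun ω => ?_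
    by_cases h : S ω ≠ 0
    · simp only [if_pos h]
      rw [← Finset.sum_div]
      have hsum : ∑ j, (I j ω : ℝ) = (S ω : ℝ) := by
        rw [hS ω]; push_cast; ring
      rw [hsum]
      have hSne : (S ω : ℝ) ≠ 0 := by exact_mod_cast h
      have hvv : v = (v - 1) + 1 := by omega
      rw [hvv, pow_succ]
      field_simp
      rw [Nat.add_sub_cancel]
    · simp only [if_neg h]
      simp
  refine ⟨heq, ?_⟩
  -- Part 2: the bound
  have hI2 := integral_comp_nat_fin P S hSmeas m hSbd
    (fun s : ℕ => if s ≠ 0 then (1:ℝ)/(s:ℝ)^(v-1) else 0)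
  rw [hI2]
  have hlaw : ∀ s, (P {ω | S ω = s}).toReal
      = (m.choose s : ℝ) * (δ ^ s * (1 - δ) ^ (m - s)) := by
    intro s
    have hset : {ω | S ω = s} = {ω | (∑ j, I j ω) = s} := by
      ext ω; rw [Set.mem_setOf_eq, Set.mem_setOf_eq, hS ω]
    rw [hset, binom_law_aux P m δ hδ0.le hδ1 I hImeas hIbdd hIiid hIlaw s,
      ENNReal.toReal_ofReal (by
        have h1d : (0:ℝ) ≤ 1 - δ := by linarith
        positivity)]
  rw [Finset.sum_congr rfl (fun s _ => by rw [hlaw s])]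
  exact real_sum_bound_aux m v hm hv δ hδ0 hδ1
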